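/- Let K = ∏ᵢ F_{qᵢ} and F = ∏ᵢ F_{pᵢ} be products of finite fields with |K| and |F| coprime. Then the map sending an (F, K)-linearly closed clonoid to its unary part is a lattice isomorphism from the lattice of all (F, K)-linearly closed clonoids onto the direct product over i of the lattices of F_{pᵢ}[K^×]-submodules of F_{pᵢ}^K. -/

import Mathlib

set_option linter.unusedSectionVars false
set_option maxHeartbeats 1000000

/-- `C` is an `(F, K)`-linearly closed clonoid: a nonempty set of finitary functions
`∏ᵢ Kᵢⁿ → F` closed under `F`-linear combinations and under precomposition with tuples
of `Kᵢ`-linear maps (given by matrices). -/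
def IsLCC {m : ℕ} (K : Fin m → Type*) [∀ i, Field (K i)] (F : Type*) [CommRing F]
    (C : ∀ n : ℕ, Set ((∀ i, Fin n → K i) → F)) : Prop :=
  (∃ n, (C n).Nonempty) ∧
  (∀ (n : ℕ) (a b : F) (f g : (∀ i, Fin n → K i) → F), f ∈ C n → g ∈ C n →
    (fun x => a * f x + b * g x) ∈ C n) ∧
  (∀ (n l : ℕ) (f : (∀ i, Fin n → K i) → F), f ∈ C n →
    ∀ A : ∀ i, Matrix (Fin n) (Fin l) (K i),
      (fun x : ∀ i, Fin l → K i => f (fun i => (A i).mulVec (x i))) ∈ C l)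

/-- The `(F, K)`-linearly closed clonoid generated by a set `S` of unary functions. -/
def ClgU {m : ℕ} (K : Fin m → Type*) [∀ i, Field (K i)] (F : Type*) [CommRing F]
    (S : Set ((∀ i, Fin 1 → K i) → F)) : ∀ n : ℕ, Set ((∀ i, Fin n → K i) → F) :=
  fun n => {f | ∀ C, IsLCC K F C → S ⊆ C 1 → f ∈ C n}

/-- `V` is an `F_p[K^×]`-submodule of `F_p^K`: nonempty, closed under `F_p`-linear
combinations, and closed under scaling of the arguments by elements of the
multiplicative monoid `K^×`. -/
def IsSubmoduleKx {m : ℕ} (K : Fin m → Type*) [∀ i, Field (K i)]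
    (Fp : Type*) [Field Fp] (V : Set ((∀ i, Fin 1 → K i) → Fp)) : Prop :=
  V.Nonempty ∧
  (∀ (a b : Fp) (f g : (∀ i, Fin 1 → K i) → Fp), f ∈ V → g ∈ V →
    (fun x => a * f x + b * g x) ∈ V) ∧
  (∀ f ∈ V, ∀ c : ∀ i, K i,
    (fun x : ∀ i, Fin 1 → K i => f (fun i j => c i * x i j)) ∈ V)



namespace LCCproof

noncomputable def χ (P : Prop) : ℤ := @ite _ P (Classical.propDecidable P) 1 0

lemma χ_true {P : Prop} (h : P) : χ P = 1 := by simp [χ, h]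
lemma χ_false {P : Prop} (h : ¬P) : χ P = 0 := by simp [χ, h]
lemma χ_congr {P Q : Prop} (h : P ↔ Q) : χ P = χ Q := by
  by_cases hp : P
  · rw [χ_true hp, χ_true (h.mp hp)]
  · rw [χ_false hp, χ_false (fun hq => hp (h.mpr hq))]

lemma sum_χ_eq {k : Type*} [Fintype k] (c : k) :
    ∑ t : k, χ (t = c) = 1 := by
  classical
  rw [Finset.sum_eq_single_of_mem c (Finset.mem_univ c)]
  · exact χ_true rfl
  · intro b _ hb; exact χ_false hb

section FieldPart

variable {k : Type*} [Field k] [Fintype k]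

def dot {n : ℕ} (a x : Fin n → k) : k := ∑ j, a j * x j

variable {n : ℕ}

lemma dot_zero_right (a : Fin n → k) : dot a 0 = 0 := by simp [dot]
lemma dot_zero_left (x : Fin n → k) : dot 0 x = 0 := by simp [dot]

lemma dot_smul_right (a : Fin n → k) (c : k) (x : Fin n → k) :
    dot a (c • x) = c * dot a x := by
  simp only [dot, Finset.mul_sum, Pi.smul_apply, smul_eq_mul]
  exact Finset.sum_congr rfl fun j _ => by ring

lemma dot_sub_right (a : Fin n → k) (x y : Fin n → k) :
    dot a (x - y) = dot a x - dot a y := by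
  simp only [dot, ← Finset.sum_sub_distrib, Pi.sub_apply]
  exact Finset.sum_congr rfl fun j _ => by ring

lemma dot_update_zero (a x : Fin n → k) (J : Fin n) :
    dot a x = dot (Function.update a J 0) x + a J * x J := by
  simp only [dot]
  rw [← Finset.sum_erase_add _ _ (Finset.mem_univ J),
      ← Finset.sum_erase_add _ (fun j => Function.update a J 0 j * x j) (Finset.mem_univ J)]
  rw [Function.update_self, zero_mul, add_zero]
  congr 1
  exact Finset.sum_congr rfl fun j hj => by
    rw [Function.update_of_ne (Finset.ne_of_mem_erase hj)]

lemma dot_update_of_zero {e : Fin n → k} (a : Fin n → k) (J : Fin n) (he : e J = 0) (v : k) :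
    dot (Function.update a J v) e = dot a e := by
  rw [dot_update_zero (Function.update a J v) e J, dot_update_zero a e J, he, mul_zero,
    mul_zero, add_zero, add_zero, Function.update_idem]

lemma update_bij {x : Fin n → k} {J : Fin n} (hxJ : x J ≠ 0) :
    Function.Bijective (fun a : Fin n → k => Function.update a J (dot a x)) := by
  apply Function.bijective_iff_has_inverse.mpr
  refine ⟨fun b => Function.update b J ((b J - dot (Function.update b J 0) x) * (x J)⁻¹), ?_, ?_⟩
  · intro a
    funext j
    dsimp only
    rcases eq_or_ne j J with rfl | hj
    · rw [Function.update_self, Function.update_idem, Function.update_self,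
        dot_update_zero a x j]
      field_simp
      ring
    · rw [Function.update_of_ne hj, Function.update_of_ne hj]
  · intro b
    funext j
    dsimp only
    rcases eq_or_ne j J with rfl | hj
    · rw [Function.update_self, dot_update_zero _ x j, Function.update_idem,
        Function.update_self]
      field_simp
      ring
    · rw [Function.update_of_ne hj, Function.update_of_ne hj]

lemma card_ne_sub {ι : Type*} [Fintype ι] [DecidableEq ι] (J : ι) :
    Fintype.card {j : ι // j ≠ J} = Fintype.card ι - 1 := by
  have := Fintype.card_subtype_compl (fun j : ι => j = J)
  simpa [Fintype.card_subtype_eq] using this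

lemma sum_eval {ι : Type*} [Fintype ι] [DecidableEq ι]
    (J : ι) (h : k → ℤ) :
    ∑ r : ι → k, h (r J) = ((Fintype.card k : ℤ)) ^ (Fintype.card ι - 1) * ∑ t, h t := by
  rw [← Equiv.sum_comp (Equiv.piSplitAt J (fun _ => k)).symm (fun r => h (r J))]
  have heval : ∀ b : k × ({j : ι // j ≠ J} → k),
      ((Equiv.piSplitAt J (fun _ => k)).symm b) J = b.1 := by
    intro b; simp [Equiv.piSplitAt]
  calc ∑ b : k × ({j : ι // j ≠ J} → k), h (((Equiv.piSplitAt J (fun _ => k)).symm b) J)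
      = ∑ b : k × ({j : ι // j ≠ J} → k), h b.1 :=
        Finset.sum_congr rfl fun b _ => by rw [heval]
    _ = ∑ t : k, ∑ _r : {j : ι // j ≠ J} → k, h t := Fintype.sum_prod_type _
    _ = ∑ t : k, (Fintype.card ({j : ι // j ≠ J} → k) : ℤ) * h t := by
        refine Finset.sum_congr rfl fun t _ => ?_
        rw [Finset.sum_const, Finset.card_univ, nsmul_eq_mul]
    _ = ((Fintype.card k : ℤ)) ^ (Fintype.card ι - 1) * ∑ t, h t := by
        rw [Finset.mul_sum]
        refine Finset.sum_congr rfl fun t _ => ?_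
        rw [Fintype.card_fun, card_ne_sub, Nat.cast_pow]

lemma sum_dot {x : Fin n → k} (hx : x ≠ 0) (h : k → ℤ) :
    ∑ a : Fin n → k, h (dot a x) =
      ((Fintype.card k : ℤ)) ^ (n - 1) * ∑ t, h t := by
  obtain ⟨J, hxJ⟩ : ∃ J, x J ≠ 0 := by
    by_contra hc
    push_neg at hc
    exact hx (funext hc)
  have hb := update_bij (n := n) hxJ
  have h1 : ∑ a : Fin n → k, h (dot a x)
      = ∑ b : Fin n → k, h (b J) := by
    rw [← Function.Bijective.sum_comp hb (fun b => h (b J))]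
    exact Finset.sum_congr rfl fun a _ => by rw [Function.update_self]
  rw [h1, sum_eval J h, Fintype.card_fin]

lemma sum_dot_dot {x d : Fin n → k} (hx : x ≠ 0) (hind : ∀ c : k, d ≠ c • x)
    (H : k → k → ℤ) :
    ∑ a : Fin n → k, H (dot a x) (dot a d) =
      ((Fintype.card k : ℤ)) ^ (n - 2) * ∑ s, ∑ t, H s t := by
  obtain ⟨J, hxJ⟩ : ∃ J, x J ≠ 0 := by
    by_contra hc; push_neg at hc; exact hx (funext hc)
  set c : k := d J * (x J)⁻¹ with hc
  set e : Fin n → k := d - c • x with he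
  have heJ : e J = 0 := by
    simp only [he, Pi.sub_apply, Pi.smul_apply, smul_eq_mul, hc]
    field_simp
    ring
  have hene : e ≠ 0 := by
    intro h0
    exact hind c (by rw [← sub_eq_zero]; exact he ▸ h0)
  obtain ⟨J', heJ'⟩ : ∃ J', e J' ≠ 0 := by
    by_contra hcc; push_neg at hcc; exact hene (funext hcc)
  have hJJ' : J' ≠ J := fun hh => heJ' (hh ▸ heJ)
  have hdot : ∀ a : Fin n → k, dot a d = dot a e + c * dot a x := by
    intro a
    rw [he, dot_sub_right, dot_smul_right]; ring
  have step1 : ∑ a : Fin n → k, H (dot a x) (dot a d)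
      = ∑ b : Fin n → k, H (b J) (dot b e + c * b J) := by
    rw [← Function.Bijective.sum_comp (update_bij hxJ)
      (fun b => H (b J) (dot b e + c * b J))]
    refine Finset.sum_congr rfl fun a _ => ?_
    rw [Function.update_self, dot_update_of_zero a J heJ, hdot]
  have step2 : ∑ b : Fin n → k, H (b J) (dot b e + c * b J)
      = ∑ v : Fin n → k, H (v J) (v J' + c * v J) := by
    rw [← Function.Bijective.sum_comp (update_bij heJ')
      (fun v => H (v J) (v J' + c * v J))]
    refine Finset.sum_congr rfl fun b _ => ?_
    rw [Function.update_of_ne (Ne.symm hJJ'), Function.update_self]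
  have step3 : ∑ v : Fin n → k, H (v J) (v J' + c * v J)
      = ((Fintype.card k : ℤ)) ^ (n - 2) * ∑ s, ∑ t, H s t := by
    rw [← Equiv.sum_comp (Equiv.piSplitAt J (fun _ => k)).symm
      (fun v => H (v J) (v J' + c * v J))]
    have heval1 : ∀ b : k × ({j : Fin n // j ≠ J} → k),
        ((Equiv.piSplitAt J (fun _ => k)).symm b) J = b.1 := by
      intro b; simp [Equiv.piSplitAt]
    have heval2 : ∀ b : k × ({j : Fin n // j ≠ J} → k),
        ((Equiv.piSplitAt J (fun _ => k)).symm b) J' = b.2 ⟨J', hJJ'⟩ := by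
      intro b; simp [Equiv.piSplitAt, dif_neg hJJ']
    calc ∑ b : k × ({j : Fin n // j ≠ J} → k),
          H (((Equiv.piSplitAt J (fun _ => k)).symm b) J)
            (((Equiv.piSplitAt J (fun _ => k)).symm b) J' +
              c * ((Equiv.piSplitAt J (fun _ => k)).symm b) J)
        = ∑ b : k × ({j : Fin n // j ≠ J} → k), H b.1 (b.2 ⟨J', hJJ'⟩ + c * b.1) :=
          Finset.sum_congr rfl fun b _ => by rw [heval1, heval2]
      _ = ∑ s : k, ∑ r : {j : Fin n // j ≠ J} → k, H s (r ⟨J', hJJ'⟩ + c * s) :=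
          Fintype.sum_prod_type _
      _ = ∑ s : k, ((Fintype.card k : ℤ)) ^ (Fintype.card {j : Fin n // j ≠ J} - 1) *
            ∑ t, H s (t + c * s) :=
          Finset.sum_congr rfl fun s _ =>
            sum_eval (ι := {j : Fin n // j ≠ J}) ⟨J', hJJ'⟩ (fun t => H s (t + c * s))
      _ = ((Fintype.card k : ℤ)) ^ (n - 2) * ∑ s, ∑ t, H s t := by
          rw [Finset.mul_sum]
          refine Finset.sum_congr rfl fun s _ => ?_
          rw [card_ne_sub, Fintype.card_fin, Nat.sub_sub]
          congr 1
          have hsh := Equiv.sum_comp (Equiv.addRight (c * s)) (fun t => H s t)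
          simp only [Equiv.coe_addRight] at hsh
          exact hsh
  rw [step1, step2, step3]


lemma exists_ne_zero {v : Fin n → k} (hv : v ≠ 0) : ∃ J, v J ≠ 0 := by
  by_contra hc; push_neg at hc; exact hv (funext hc)

lemma smul_vec_eq_zero_iff {d : Fin n → k} (hd : d ≠ 0) (s : k) :
    s • d = 0 ↔ s = 0 := by
  rw [smul_eq_zero]; simp [hd]

lemma smul_eq_self_iff {x : Fin n → k} (hx : x ≠ 0) (t : k) : t • x = x ↔ t = 1 := by
  constructor
  · intro h
    obtain ⟨J, hxJ⟩ := exists_ne_zero hx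
    have h2 : t * x J = 1 * x J := by
      rw [one_mul]; simpa using congrFun h J
    exact mul_right_cancel₀ hxJ h2
  · rintro rfl; exact one_smul _ _

/-- `d` is a "normalized" vector: its first nonzero coordinate is `1`. -/
def InD {n : ℕ} (d : Fin n → k) : Prop := ∃ J, d J = 1 ∧ ∀ j, j < J → d j = 0

lemma InD_ne_zero {d : Fin n → k} (h : InD d) : d ≠ 0 := by
  obtain ⟨J, h1, -⟩ := h
  intro h0
  rw [h0] at h1
  exact one_ne_zero h1.symm

lemma norm_exists {z : Fin n → k} (hz : z ≠ 0) :
    ∃ (σ : k) (d₀ : Fin n → k), σ ≠ 0 ∧ InD d₀ ∧ z = σ • d₀ ∧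
      ∀ (c' : k) (d' : Fin n → k), InD d' → z = c' • d' → c' = σ ∧ d' = d₀ := by
  classical
  have hTne : (Finset.univ.filter (fun j => z j ≠ 0)).Nonempty := by
    obtain ⟨J, hJ⟩ := exists_ne_zero hz
    exact ⟨J, by simp [hJ]⟩
  obtain ⟨J, hJmem, hJmin⟩ : ∃ J ∈ Finset.univ.filter (fun j => z j ≠ 0),
      ∀ j ∈ Finset.univ.filter (fun j => z j ≠ 0), J ≤ j :=
    ⟨_, Finset.min'_mem _ hTne, fun j hj => Finset.min'_le _ j hj⟩
  have hzJ : z J ≠ 0 := by simpa using hJmem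
  have hmin : ∀ j, z j ≠ 0 → J ≤ j := fun j hj => hJmin j (by simp [hj])
  refine ⟨z J, (z J)⁻¹ • z, hzJ, ⟨J, ?_, ?_⟩, ?_, ?_⟩
  · simp only [Pi.smul_apply, smul_eq_mul]
    exact inv_mul_cancel₀ hzJ
  · intro j hjJ
    simp only [Pi.smul_apply, smul_eq_mul]
    rcases eq_or_ne (z j) 0 with h0 | h0
    · rw [h0, mul_zero]
    · exact absurd (hmin j h0) (not_le.mpr hjJ)
  · funext j
    simp only [Pi.smul_apply, smul_eq_mul]
    rw [← mul_assoc, mul_inv_cancel₀ hzJ, one_mul]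
  · intro c' d' hd' heq
    obtain ⟨J'', h1, h2⟩ := hd'
    have hz' : ∀ j, z j = c' * d' j := by
      intro j
      rw [heq]; simp
    have hc' : c' ≠ 0 := by
      intro h0
      apply hz
      funext j
      rw [hz' j, h0, zero_mul]; simp
    have hJ2 : J'' = J := by
      rcases lt_trichotomy J'' J with h | h | h
      · exfalso
        have hne : z J'' ≠ 0 := by rw [hz' J'', h1, mul_one]; exact hc'
        exact absurd (hmin J'' hne) (not_le.mpr h)
      · exact h
      · exfalso
        apply hzJ
        rw [hz' J, h2 J h, mul_zero]
    have hcs : c' = z J := by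
      rw [hz' J, ← hJ2, h1, mul_one]
    refine ⟨hcs, ?_⟩
    funext j
    have h3 := hz' j
    simp only [Pi.smul_apply, smul_eq_mul]
    rw [← hcs, h3, ← mul_assoc, inv_mul_cancel₀ hc', one_mul]

lemma sum_g : ∑ t : k, (χ (t = 1) - χ (t = 0)) = 0 := by
  rw [Finset.sum_sub_distrib, sum_χ_eq, sum_χ_eq, sub_self]

lemma G_zero {d : Fin n → k} (hd : d ≠ 0) :
    ∑ a : Fin n → k, (χ (dot a d = 1) - χ (dot a d = 0)) = 0 := by
  rw [sum_dot hd (fun t => χ (t = 1) - χ (t = 0)), sum_g, mul_zero]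

lemma G_indep {x d : Fin n → k} (hx : x ≠ 0) (hind : ∀ c : k, d ≠ c • x) (σ : k) :
    ∑ a : Fin n → k, (χ (dot a d = 1) - χ (dot a d = 0)) * χ (dot a x = σ) = 0 := by
  have h := sum_dot_dot hx hind (fun s t => (χ (t = 1) - χ (t = 0)) * χ (s = σ))
  rw [h]
  have hz : ∀ s : k, ∑ t : k, (χ (t = 1) - χ (t = 0)) * χ (s = σ) = 0 := by
    intro s
    rw [← Finset.sum_mul, sum_g, zero_mul]
  rw [Finset.sum_congr rfl fun s _ => hz s, Finset.sum_const, smul_zero, mul_zero]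

lemma G_line {x : Fin n → k} (hx : x ≠ 0) (c σ : k) :
    ∑ a : Fin n → k,
        (χ (dot a (c • x) = 1) - χ (dot a (c • x) = 0)) * χ (dot a x = σ)
      = (Fintype.card k : ℤ) ^ (n - 1) * (χ (c * σ = 1) - χ (c * σ = 0)) := by
  have h1 : ∀ a : Fin n → k,
      (χ (dot a (c • x) = 1) - χ (dot a (c • x) = 0)) * χ (dot a x = σ)
        = (fun s => (χ (c * s = 1) - χ (c * s = 0)) * χ (s = σ)) (dot a x) := by
    intro a
    rw [dot_smul_right]
  rw [Finset.sum_congr rfl fun a _ => h1 a,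
    sum_dot hx (fun s => (χ (c * s = 1) - χ (c * s = 0)) * χ (s = σ))]
  congr 1
  rw [Finset.sum_eq_single_of_mem σ (Finset.mem_univ σ)]
  · rw [χ_true rfl, mul_one]
  · intro b _ hb
    rw [χ_false hb, mul_zero]


/-- The magic integer weight. -/
noncomputable def Nw {n : ℕ} (a d : Fin n → k) : ℤ :=
  χ (a = 0 ∧ d = 0) * (Fintype.card k : ℤ) ^ (n - 1) +
    χ (InD d) * (χ (dot a d = 1) - χ (dot a d = 0))

/-- The fundamental counting identity over a single finite field. -/
lemma field_count (x z : Fin n → k) :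
    ∑ a : Fin n → k, ∑ d : Fin n → k, Nw a d * χ ((dot a x) • d = z)
      = (Fintype.card k : ℤ) ^ (n - 1) * χ (x = z) := by
  classical
  have hsplit : ∑ a : Fin n → k, ∑ d : Fin n → k, Nw a d * χ ((dot a x) • d = z)
      = (∑ a : Fin n → k, ∑ d : Fin n → k,
          χ (a = 0 ∧ d = 0) * (Fintype.card k : ℤ) ^ (n - 1) * χ ((dot a x) • d = z)) +
        (∑ d : Fin n → k, χ (InD d) * ∑ a : Fin n → k,
          (χ (dot a d = 1) - χ (dot a d = 0)) * χ ((dot a x) • d = z)) := by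
    calc ∑ a : Fin n → k, ∑ d : Fin n → k, Nw a d * χ ((dot a x) • d = z)
        = ∑ a : Fin n → k, ∑ d : Fin n → k,
            (χ (a = 0 ∧ d = 0) * (Fintype.card k : ℤ) ^ (n - 1) * χ ((dot a x) • d = z) +
             χ (InD d) * ((χ (dot a d = 1) - χ (dot a d = 0)) * χ ((dot a x) • d = z))) :=
          Finset.sum_congr rfl fun a _ => Finset.sum_congr rfl fun d _ => by
            rw [Nw]; ring
      _ = ∑ a : Fin n → k, (∑ d : Fin n → k,
            χ (a = 0 ∧ d = 0) * (Fintype.card k : ℤ) ^ (n - 1) * χ ((dot a x) • d = z) +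
          ∑ d : Fin n → k,
            χ (InD d) * ((χ (dot a d = 1) - χ (dot a d = 0)) * χ ((dot a x) • d = z))) :=
          Finset.sum_congr rfl fun a _ => Finset.sum_add_distrib
      _ = (∑ a : Fin n → k, ∑ d : Fin n → k,
            χ (a = 0 ∧ d = 0) * (Fintype.card k : ℤ) ^ (n - 1) * χ ((dot a x) • d = z)) +
          ∑ a : Fin n → k, ∑ d : Fin n → k,
            χ (InD d) * ((χ (dot a d = 1) - χ (dot a d = 0)) * χ ((dot a x) • d = z)) :=
          Finset.sum_add_distrib
      _ = _ := by
          congr 1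
          rw [Finset.sum_comm]
          exact Finset.sum_congr rfl fun d _ => (Finset.mul_sum _ _ _).symm
  have hT1 : (∑ a : Fin n → k, ∑ d : Fin n → k,
      χ (a = 0 ∧ d = 0) * (Fintype.card k : ℤ) ^ (n - 1) * χ ((dot a x) • d = z))
        = (Fintype.card k : ℤ) ^ (n - 1) * χ ((0 : Fin n → k) = z) := by
    rw [Finset.sum_eq_single_of_mem (0 : Fin n → k) (Finset.mem_univ _)]
    · rw [Finset.sum_eq_single_of_mem (0 : Fin n → k) (Finset.mem_univ _)]
      · rw [χ_true ⟨rfl, rfl⟩, one_mul, dot_zero_left, zero_smul]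
      · intro d _ hd
        rw [χ_false (fun h => hd h.2), zero_mul, zero_mul]
    · intro a _ ha
      exact Finset.sum_eq_zero fun d _ => by
        rw [χ_false (fun h => ha h.1), zero_mul, zero_mul]
  have hT2 : (∑ d : Fin n → k, χ (InD d) * ∑ a : Fin n → k,
      (χ (dot a d = 1) - χ (dot a d = 0)) * χ ((dot a x) • d = z))
        = (Fintype.card k : ℤ) ^ (n - 1) * χ (x = z)
          - (Fintype.card k : ℤ) ^ (n - 1) * χ ((0 : Fin n → k) = z) := by
    by_cases hz : z = 0
    · subst hz
      rw [χ_true rfl, mul_one]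
      by_cases hx : x = 0
      · subst hx
        rw [χ_true rfl, mul_one, sub_self]
        refine Finset.sum_eq_zero fun d _ => ?_
        by_cases hInD : InD d
        · have hinner : ∑ a : Fin n → k,
              (χ (dot a d = 1) - χ (dot a d = 0)) * χ ((dot a (0 : Fin n → k)) • d = (0 : Fin n → k))
                = 0 := by
            have he : ∀ a : Fin n → k,
                (χ (dot a d = 1) - χ (dot a d = 0)) * χ ((dot a (0 : Fin n → k)) • d = (0 : Fin n → k))
                  = (χ (dot a d = 1) - χ (dot a d = 0)) := by
              intro a
              rw [dot_zero_right, zero_smul, χ_true rfl, mul_one]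
            rw [Finset.sum_congr rfl fun a _ => he a]
            exact G_zero (InD_ne_zero hInD)
          rw [hinner, mul_zero]
        · rw [χ_false hInD, zero_mul]
      · -- x ≠ 0, z = 0 : sum is -q^(n-1)
        rw [χ_false hx, mul_zero, zero_sub]
        obtain ⟨σ, d₀, hσ, hd₀, hxeq, huniq⟩ := norm_exists hx
        rw [Finset.sum_eq_single_of_mem d₀ (Finset.mem_univ _)]
        · rw [χ_true hd₀, one_mul]
          have he : ∀ a : Fin n → k,
              (χ (dot a d₀ = 1) - χ (dot a d₀ = 0)) * χ ((dot a x) • d₀ = (0 : Fin n → k))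
                = (χ (dot a (σ⁻¹ • x) = 1) - χ (dot a (σ⁻¹ • x) = 0)) * χ (dot a x = 0) := by
            intro a
            have hd0x : d₀ = σ⁻¹ • x := by
              rw [hxeq, smul_smul, inv_mul_cancel₀ hσ, one_smul]
            rw [← hd0x, χ_congr (smul_vec_eq_zero_iff (InD_ne_zero hd₀) _)]
          rw [Finset.sum_congr rfl fun a _ => he a, G_line hx σ⁻¹ 0, mul_zero,
            χ_false one_ne_zero.symm, χ_true rfl, zero_sub, mul_neg, mul_one]
        · intro d _ hd
          by_cases hInD : InD d
          · have hnl : ∀ c : k, d ≠ c • x := by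
              intro c hdc
              have hc0 : c ≠ 0 := by
                intro h0
                exact InD_ne_zero hInD (by rw [hdc, h0, zero_smul])
              have hxd : x = c⁻¹ • d := by
                rw [hdc, smul_smul, inv_mul_cancel₀ hc0, one_smul]
              exact hd (huniq c⁻¹ d hInD hxd).2
            have he : ∀ a : Fin n → k,
                (χ (dot a d = 1) - χ (dot a d = 0)) * χ ((dot a x) • d = (0 : Fin n → k))
                  = (χ (dot a d = 1) - χ (dot a d = 0)) * χ (dot a x = 0) := by
              intro a
              rw [χ_congr (smul_vec_eq_zero_iff (InD_ne_zero hInD) _)]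
            rw [Finset.sum_congr rfl fun a _ => he a, G_indep hx hnl 0, mul_zero]
          · rw [χ_false hInD, zero_mul]
    · -- z ≠ 0
      rw [show χ ((0 : Fin n → k) = z) = 0 from χ_false (fun h => hz h.symm), mul_zero,
        sub_zero]
      obtain ⟨σ, d₀, hσ, hd₀, hzeq, huniq⟩ := norm_exists hz
      rw [Finset.sum_eq_single_of_mem d₀ (Finset.mem_univ _)]
      · rw [χ_true hd₀, one_mul]
        have hiff : ∀ a : Fin n → k, ((dot a x) • d₀ = z) ↔ (dot a x = σ) := by
          intro a
          constructor
          · intro h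
            have hs0 : dot a x ≠ 0 := by
              intro h0
              rw [h0, zero_smul] at h
              exact hz h.symm
            exact (huniq (dot a x) d₀ hd₀ h.symm).1
          · intro h
            rw [h]; exact hzeq.symm
        have he : ∀ a : Fin n → k,
            (χ (dot a d₀ = 1) - χ (dot a d₀ = 0)) * χ ((dot a x) • d₀ = z)
              = (χ (dot a d₀ = 1) - χ (dot a d₀ = 0)) * χ (dot a x = σ) := by
          intro a; rw [χ_congr (hiff a)]
        rw [Finset.sum_congr rfl fun a _ => he a]
        by_cases hx : x = 0
        · have hzz : ∀ a : Fin n → k,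
              (χ (dot a d₀ = 1) - χ (dot a d₀ = 0)) * χ (dot a x = σ) = 0 := by
            intro a
            rw [hx, dot_zero_right,
              show χ ((0:k) = σ) = 0 from χ_false (fun h => hσ h.symm), mul_zero]
          rw [Finset.sum_congr rfl fun a _ => hzz a, Finset.sum_const, smul_zero,
            show χ (x = z) = 0 from χ_false (fun h => hz (by rw [← h, hx])), mul_zero]
        · by_cases hline : ∃ c : k, d₀ = c • x
          · obtain ⟨c, hc⟩ := hline
            have hc0 : c ≠ 0 := by
              intro h0
              exact InD_ne_zero hd₀ (by rw [hc, h0, zero_smul])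
            rw [hc, G_line hx c σ]
            congr 1
            rw [χ_false (mul_ne_zero hc0 hσ), sub_zero]
            apply χ_congr
            have hzx : z = (σ * c) • x := by
              rw [hzeq, hc, smul_smul]
            constructor
            · intro h1
              rw [hzx]
              have : (σ * c) = 1 := by rw [mul_comm] at h1; exact h1
              rw [this, one_smul]
            · intro h
              have h2 : (σ * c) • x = x := by rw [← hzx, h]
              have := (smul_eq_self_iff hx (σ * c)).mp h2
              rw [mul_comm] at this; exact this
          · push_neg at hline
            rw [G_indep hx hline σ]
            have hxz : x ≠ z := by
              intro h
              exact hline σ⁻¹ (by rw [h, hzeq, smul_smul, inv_mul_cancel₀ hσ, one_smul])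
            rw [χ_false hxz, mul_zero]
      · intro d _ hd
        by_cases hInD : InD d
        · have he : ∀ a : Fin n → k,
              (χ (dot a d = 1) - χ (dot a d = 0)) * χ ((dot a x) • d = z) = 0 := by
            intro a
            have : ¬ ((dot a x) • d = z) := by
              intro h
              exact hd (huniq (dot a x) d hInD h.symm).2
            rw [χ_false this, mul_zero]
          rw [Finset.sum_congr rfl fun a _ => he a, Finset.sum_const, smul_zero, mul_zero]
        · rw [χ_false hInD, zero_mul]
  rw [hsplit, hT1, hT2]
  ring


end FieldPart

section Global

variable {m : ℕ} {K : Fin m → Type*} [∀ i, Field (K i)] [∀ i, Fintype (K i)] {n : ℕ}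

lemma χ_prod {P : Fin m → Prop} : (∏ i, χ (P i)) = χ (∀ i, P i) := by
  by_cases h : ∀ i, P i
  · rw [χ_true h]
    exact Finset.prod_eq_one fun i _ => χ_true (h i)
  · rw [χ_false h]
    push_neg at h
    obtain ⟨i0, hi0⟩ := h
    exact Finset.prod_eq_zero (Finset.mem_univ i0) (χ_false hi0)

/-- Product of the per-field integer weights. -/
noncomputable def NWp (a d : ∀ i, Fin n → K i) : ℤ := ∏ i, Nw (a i) (d i)

/-- The rank-one substitution `x ↦ (a·x) d`, componentwise over the factor fields. -/
def scaleArg (a d x : ∀ i, Fin n → K i) : ∀ i, Fin n → K i :=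
  fun i => (dot (a i) (x i)) • d i

lemma sum_pi_prod (G : ∀ i, (Fin n → K i) → ℤ) :
    ∑ y : ∀ i, Fin n → K i, ∏ i, G i (y i) = ∏ i, ∑ v : Fin n → K i, G i v := by
  classical
  have h := Finset.prod_univ_sum (fun _ : Fin m => (Finset.univ : Finset (Fin n → K _))) G
  rw [Fintype.piFinset_univ] at h
  exact h.symm

lemma global_count (x z : ∀ i, Fin n → K i) :
    ∑ a : ∀ i, Fin n → K i, ∑ d : ∀ i, Fin n → K i, NWp a d * χ (scaleArg a d x = z)
      = (∏ i, (Fintype.card (K i) : ℤ) ^ (n - 1)) * χ (x = z) := by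
  classical
  have hterm : ∀ a d : ∀ i, Fin n → K i, NWp a d * χ (scaleArg a d x = z)
      = ∏ i, (Nw (a i) (d i) * χ ((dot (a i) (x i)) • d i = z i)) := by
    intro a d
    rw [Finset.prod_mul_distrib]
    congr 1
    rw [χ_prod]
    exact χ_congr funext_iff
  calc ∑ a : ∀ i, Fin n → K i, ∑ d : ∀ i, Fin n → K i, NWp a d * χ (scaleArg a d x = z)
      = ∑ a : ∀ i, Fin n → K i, ∑ d : ∀ i, Fin n → K i,
          ∏ i, (Nw (a i) (d i) * χ ((dot (a i) (x i)) • d i = z i)) :=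
        Finset.sum_congr rfl fun a _ => Finset.sum_congr rfl fun d _ => hterm a d
    _ = ∑ a : ∀ i, Fin n → K i,
          ∏ i, ∑ v : Fin n → K i, (Nw (a i) v * χ ((dot (a i) (x i)) • v = z i)) :=
        Finset.sum_congr rfl fun a _ =>
          sum_pi_prod (fun i v => Nw (a i) v * χ ((dot (a i) (x i)) • v = z i))
    _ = ∏ i, ∑ u : Fin n → K i, ∑ v : Fin n → K i,
          (Nw u v * χ ((dot u (x i)) • v = z i)) :=
        sum_pi_prod (fun i u => ∑ v : Fin n → K i, (Nw u v * χ ((dot u (x i)) • v = z i)))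
    _ = ∏ i, ((Fintype.card (K i) : ℤ) ^ (n - 1) * χ (x i = z i)) :=
        Finset.prod_congr rfl fun i _ => field_count (x i) (z i)
    _ = (∏ i, (Fintype.card (K i) : ℤ) ^ (n - 1)) * χ (x = z) := by
        rw [Finset.prod_mul_distrib]
        congr 1
        rw [χ_prod]
        exact χ_congr funext_iff.symm

lemma expand {R : Type*} [CommRing R] (f : (∀ i, Fin n → K i) → R) (x : ∀ i, Fin n → K i) :
    ∑ a : ∀ i, Fin n → K i, ∑ d : ∀ i, Fin n → K i,
        ((NWp a d : ℤ) : R) * f (scaleArg a d x)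
      = ((∏ i, (Fintype.card (K i) : ℤ) ^ (n - 1) : ℤ) : R) * f x := by
  classical
  have step1 : ∀ a d : ∀ i, Fin n → K i,
      ((NWp a d : ℤ) : R) * f (scaleArg a d x)
        = ∑ z : ∀ i, Fin n → K i, ((NWp a d * χ (scaleArg a d x = z) : ℤ) : R) * f z := by
    intro a d
    rw [Finset.sum_eq_single_of_mem (scaleArg a d x) (Finset.mem_univ _)]
    · rw [χ_true rfl, mul_one]
    · intro z _ hz
      rw [χ_false (fun h => hz h.symm), mul_zero, Int.cast_zero, zero_mul]
  calc ∑ a : ∀ i, Fin n → K i, ∑ d : ∀ i, Fin n → K i,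
        ((NWp a d : ℤ) : R) * f (scaleArg a d x)
      = ∑ a : ∀ i, Fin n → K i, ∑ d : ∀ i, Fin n → K i, ∑ z : ∀ i, Fin n → K i,
          ((NWp a d * χ (scaleArg a d x = z) : ℤ) : R) * f z :=
        Finset.sum_congr rfl fun a _ => Finset.sum_congr rfl fun d _ => step1 a d
    _ = ∑ z : ∀ i, Fin n → K i, ∑ a : ∀ i, Fin n → K i, ∑ d : ∀ i, Fin n → K i,
          ((NWp a d * χ (scaleArg a d x = z) : ℤ) : R) * f z := by
        rw [Finset.sum_congr rfl fun a (_ : a ∈ Finset.univ) => Finset.sum_comm]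
        exact Finset.sum_comm
    _ = ∑ z : ∀ i, Fin n → K i,
          ((∑ a : ∀ i, Fin n → K i, ∑ d : ∀ i, Fin n → K i,
            NWp a d * χ (scaleArg a d x = z) : ℤ) : R) * f z := by
        refine Finset.sum_congr rfl fun z _ => ?_
        rw [Int.cast_sum, Finset.sum_mul]
        refine Finset.sum_congr rfl fun a _ => ?_
        rw [Int.cast_sum, Finset.sum_mul]
    _ = ∑ z : ∀ i, Fin n → K i,
          (((∏ i, (Fintype.card (K i) : ℤ) ^ (n - 1)) * χ (x = z) : ℤ) : R) * f z :=
        Finset.sum_congr rfl fun z _ => by rw [global_count]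
    _ = ((∏ i, (Fintype.card (K i) : ℤ) ^ (n - 1) : ℤ) : R) * f x := by
        rw [Finset.sum_eq_single_of_mem x (Finset.mem_univ _)]
        · rw [χ_true rfl, mul_one]
        · intro z _ hz
          rw [χ_false (fun h => hz (h.symm)), mul_zero, Int.cast_zero, zero_mul]

end Global


section Clonoid

variable {m : ℕ} {K : Fin m → Type*} [∀ i, Field (K i)] [∀ i, Fintype (K i)]
variable {F : Type*} [CommRing F]

lemma combo_sum {α : Type*} {V : Set (α → F)}
    (hne : V.Nonempty)
    (hcomb : ∀ (a b : F) (f g : α → F), f ∈ V → g ∈ V → (fun x => a * f x + b * g x) ∈ V)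
    {ι : Type*} [DecidableEq ι] (t : Finset ι) (c : ι → F) (g : ι → (α → F)) :
    (∀ j ∈ t, g j ∈ V) → (fun x => ∑ j ∈ t, c j * g j x) ∈ V := by
  induction t using Finset.induction_on with
  | empty =>
    intro _
    obtain ⟨f0, hf0⟩ := hne
    have h := hcomb 0 0 f0 f0 hf0 hf0
    have he : (fun x => (0:F) * f0 x + 0 * f0 x)
        = (fun x => ∑ j ∈ (∅ : Finset ι), c j * g j x) := by
      funext x; simp
    rwa [he] at h
  | @insert a t' ha ih =>
    intro hg
    have h1 : g a ∈ V := hg a (Finset.mem_insert_self a t')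
    have h2 := ih (fun j hj => hg j (Finset.mem_insert_of_mem hj))
    have h3 := hcomb (c a) 1 (g a) _ h1 h2
    have he : (fun x => c a * g a x + 1 * (∑ j ∈ t', c j * g j x))
        = (fun x => ∑ j ∈ insert a t', c j * g j x) := by
      funext x; rw [Finset.sum_insert ha, one_mul]
    rwa [he] at h3

variable {C D : ∀ n : ℕ, Set ((∀ i, Fin n → K i) → F)}

lemma lcc_nonempty (hC : IsLCC K F C) (l : ℕ) : (C l).Nonempty := by
  obtain ⟨n0, f0, hf0⟩ := hC.1
  exact ⟨_, hC.2.2 n0 l f0 hf0 (fun i => 0)⟩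

lemma lcc_sum (hC : IsLCC K F C) {n : ℕ} {ι : Type*} [DecidableEq ι] (t : Finset ι)
    (c : ι → F) (g : ι → ((∀ i, Fin n → K i) → F)) (hg : ∀ j ∈ t, g j ∈ C n) :
    (fun x => ∑ j ∈ t, c j * g j x) ∈ C n :=
  combo_sum (lcc_nonempty hC n) (hC.2.1 n) t c g hg

/-- Evaluation of a tuple of linear forms (one per factor field). -/
def rowFn {n : ℕ} (a x : ∀ i, Fin n → K i) : ∀ i, Fin 1 → K i :=
  fun i _ => dot (a i) (x i)

/-- Scaling a fixed direction `d` by a scalar tuple. -/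
def colFn {n : ℕ} (d : ∀ i, Fin n → K i) (y : ∀ i, Fin 1 → K i) : ∀ i, Fin n → K i :=
  fun i j => d i j * y i 0

lemma colFn_rowFn {n : ℕ} (a d x : ∀ i, Fin n → K i) :
    colFn d (rowFn a x) = scaleArg a d x := by
  funext i j
  simp only [colFn, rowFn, scaleArg, Pi.smul_apply, smul_eq_mul]
  ring

lemma col_mem (hC : IsLCC K F C) {n : ℕ} {f} (hf : f ∈ C n) (d : ∀ i, Fin n → K i) :
    (fun y => f (colFn d y)) ∈ C 1 := by
  have h := hC.2.2 n 1 f hf (fun i => Matrix.of (fun j (_ : Fin 1) => d i j))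
  have he : (fun y : ∀ i, Fin 1 → K i =>
      f (fun i => Matrix.mulVec (Matrix.of fun j (_ : Fin 1) => d i j) (y i)))
      = fun y => f (colFn d y) := by
    funext y
    congr 1
    funext i j
    simp [Matrix.mulVec, dotProduct, colFn]
  rwa [he] at h

lemma row_mem (hD : IsLCC K F D) {u} (hu : u ∈ D 1) {n : ℕ} (a : ∀ i, Fin n → K i) :
    (fun x => u (rowFn a x)) ∈ D n := by
  have h := hD.2.2 1 n u hu (fun i => Matrix.of (fun (_ : Fin 1) j => a i j))
  have he : (fun x : ∀ i, Fin n → K i =>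
      u (fun i => Matrix.mulVec (Matrix.of fun (_ : Fin 1) j => a i j) (x i)))
      = fun x => u (rowFn a x) := by
    funext x
    rfl
  rwa [he] at h

end Clonoid


section Engine

variable {m s : ℕ} {K : Fin m → Type*} [∀ i, Field (K i)] [∀ i, Fintype (K i)]
variable {Fp : Fin s → Type*} [∀ i, Field (Fp i)] [∀ i, Fintype (Fp i)]

lemma card_cast_ne_zero
    (hcop : Nat.Coprime (∏ i, Fintype.card (K i)) (∏ i, Fintype.card (Fp i))) (i : Fin s) :
    ((∏ j, Fintype.card (K j) : ℕ) : Fp i) ≠ 0 := by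
  intro h0
  haveI : CharP (Fp i) (ringChar (Fp i)) := ringChar.charP (Fp i)
  have hdvd : ringChar (Fp i) ∣ ∏ j, Fintype.card (K j) :=
    (CharP.cast_eq_zero_iff (Fp i) (ringChar (Fp i)) _).mp h0
  have hprime : (ringChar (Fp i)).Prime := CharP.char_is_prime (Fp i) (ringChar (Fp i))
  obtain ⟨nn, -, hcard⟩ := FiniteField.card (Fp i) (ringChar (Fp i))
  have hd1 : ringChar (Fp i) ∣ Fintype.card (Fp i) := by
    rw [hcard]
    exact dvd_pow_self _ (by exact_mod_cast nn.ne_zero : (nn : ℕ) ≠ 0)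
  have hdvd2 : ringChar (Fp i) ∣ ∏ j, Fintype.card (Fp j) :=
    dvd_trans hd1 (Finset.dvd_prod_of_mem _ (Finset.mem_univ i))
  have hone : ringChar (Fp i) ∣ 1 := hcop ▸ Nat.dvd_gcd hdvd hdvd2
  exact hprime.one_lt.ne' (Nat.dvd_one.mp hone)

variable {C D : ∀ n : ℕ, Set ((∀ i, Fin n → K i) → (∀ i, Fp i))}

/-- Key engine: if the unary parts are nested then so are all the parts. -/
lemma mem_of_unary
    (hcop : Nat.Coprime (∏ i, Fintype.card (K i)) (∏ i, Fintype.card (Fp i)))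
    (hC : IsLCC K (∀ i, Fp i) C) (hD : IsLCC K (∀ i, Fp i) D) (h1 : C 1 ⊆ D 1)
    {n : ℕ} {f} (hf : f ∈ C n) : f ∈ D n := by
  classical
  set QZ : ℤ := ∏ i, (Fintype.card (K i) : ℤ) ^ (n - 1) with hQZ
  have hQZcast : ∀ i : Fin s, ((QZ : ℤ) : Fp i) ≠ 0 := by
    intro i
    have hrw : ((QZ : ℤ) : Fp i) = (((∏ j, Fintype.card (K j) : ℕ) : Fp i)) ^ (n - 1) := by
      rw [hQZ]
      push_cast
      rw [Finset.prod_pow]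
    rw [hrw]
    exact pow_ne_zero _ (card_cast_ne_zero hcop i)
  set u : ∀ i, Fp i := fun i => (((QZ : ℤ) : Fp i))⁻¹ with hu
  have huQ : u * ((QZ : ℤ) : ∀ i, Fp i) = 1 := by
    funext i
    have : ((QZ : ℤ) : ∀ i, Fp i) i = ((QZ : ℤ) : Fp i) := by
      simp
    rw [Pi.mul_apply, this, hu]
    exact inv_mul_cancel₀ (hQZcast i)
  have hterm : ∀ p : (∀ i, Fin n → K i) × (∀ i, Fin n → K i),
      (fun x => f (colFn p.2 (rowFn p.1 x))) ∈ D n := by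
    intro p
    exact row_mem hD (h1 (col_mem hC hf p.2)) p.1
  have hmem := lcc_sum hD (Finset.univ : Finset ((∀ i, Fin n → K i) × (∀ i, Fin n → K i)))
      (fun p => u * ((NWp p.1 p.2 : ℤ) : ∀ i, Fp i))
      (fun p => fun x => f (colFn p.2 (rowFn p.1 x)))
      (fun p _ => hterm p)
  have he : (fun x => ∑ p : (∀ i, Fin n → K i) × (∀ i, Fin n → K i),
      (u * ((NWp p.1 p.2 : ℤ) : ∀ i, Fp i)) * f (colFn p.2 (rowFn p.1 x))) = f := by
    funext x
    have hstep : ∀ p : (∀ i, Fin n → K i) × (∀ i, Fin n → K i),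
        (u * ((NWp p.1 p.2 : ℤ) : ∀ i, Fp i)) * f (colFn p.2 (rowFn p.1 x))
          = u * (((NWp p.1 p.2 : ℤ) : ∀ i, Fp i) * f (scaleArg p.1 p.2 x)) := by
      intro p
      rw [colFn_rowFn, mul_assoc]
    rw [Finset.sum_congr rfl fun p _ => hstep p, ← Finset.mul_sum]
    rw [Fintype.sum_prod_type, expand f x]
    rw [← mul_assoc, huQ, one_mul]
  rwa [he] at hmem

/-- A unary function whose components all agree with components of members of `D 1`
is itself in `D 1`. -/
lemma unary_mem_of_components (hD : IsLCC K (∀ i, Fp i) D)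
    (g : (∀ i, Fin 1 → K i) → ∀ i, Fp i)
    (h : ∀ i, ∃ h' ∈ D 1, (fun x => g x i) = fun x => h' x i) : g ∈ D 1 := by
  classical
  choose hcomp hmem heq using h
  have hs := lcc_sum hD Finset.univ
      (fun i => (Pi.single i (1 : Fp i) : ∀ i', Fp i')) hcomp (fun i _ => hmem i)
  have he : (fun x => ∑ i, (Pi.single i (1 : Fp i) : ∀ i', Fp i') * hcomp i x) = g := by
    funext x
    funext i''
    rw [Finset.sum_apply]
    rw [Finset.sum_eq_single_of_mem i'' (Finset.mem_univ _)]
    · rw [Pi.mul_apply, Pi.single_eq_same, one_mul]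
      exact (congrFun (heq i'') x).symm
    · intro b _ hb
      rw [Pi.mul_apply, Pi.single_eq_of_ne (Ne.symm hb), zero_mul]
  rwa [he] at hs

end Engine


section Gen

variable {m : ℕ} {K : Fin m → Type*} [∀ i, Field (K i)] [∀ i, Fintype (K i)]
variable {F : Type*} [CommRing F]

/-- The explicit `(F,K)`-linearly closed clonoid generated by a set `S` of unary
functions: all linear combinations of members of `S` precomposed with linear forms. -/
def Tclo (S : Set ((∀ i, Fin 1 → K i) → F)) : ∀ n : ℕ, Set ((∀ i, Fin n → K i) → F) :=
  fun n => {h | ∃ (t : ℕ) (c : Fin t → F) (u : Fin t → ((∀ i, Fin 1 → K i) → F))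
    (a : Fin t → ∀ i, Fin n → K i),
    (∀ j, u j ∈ S) ∧ h = fun x => ∑ j, c j * u j (rowFn (a j) x)}

lemma Tclo_isLCC (S : Set ((∀ i, Fin 1 → K i) → F)) : IsLCC K F (Tclo S) := by
  refine ⟨⟨0, ?_⟩, ?_, ?_⟩
  · exact ⟨_, 0, Fin.elim0, Fin.elim0, Fin.elim0, fun j => j.elim0, rfl⟩
  · rintro n A B f g ⟨t₁, c₁, u₁, a₁, hu₁, rfl⟩ ⟨t₂, c₂, u₂, a₂, hu₂, rfl⟩
    refine ⟨t₁ + t₂, Fin.addCases (fun j => A * c₁ j) (fun j => B * c₂ j),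
      Fin.addCases u₁ u₂, Fin.addCases a₁ a₂, ?_, ?_⟩
    · intro j
      refine Fin.addCases (motive := fun j => Fin.addCases u₁ u₂ j ∈ S)
        (fun l => ?_) (fun r => ?_) j
      · simpa [Fin.addCases_left] using hu₁ l
      · simpa [Fin.addCases_right] using hu₂ r
    · funext x
      dsimp only
      rw [Fin.sum_univ_add]
      congr 1
      · rw [Finset.mul_sum]
        refine Finset.sum_congr rfl fun l _ => ?_
        simp only [Fin.addCases_left]
        ring
      · rw [Finset.mul_sum]
        refine Finset.sum_congr rfl fun r _ => ?_
        simp only [Fin.addCases_right]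
        ring
  · rintro n l f ⟨t, c, uu, a, hu, rfl⟩ A
    refine ⟨t, c, uu, fun j i => Matrix.vecMul (a j i) (A i), hu, ?_⟩
    funext x
    dsimp only
    refine Finset.sum_congr rfl fun j _ => ?_
    congr 2
    funext i cc
    show dot (a j i) (Matrix.mulVec (A i) (x i)) = dot (Matrix.vecMul (a j i) (A i)) (x i)
    exact Matrix.dotProduct_mulVec _ _ _

lemma S_sub_Tclo (S : Set ((∀ i, Fin 1 → K i) → F)) : S ⊆ Tclo S 1 := by
  intro g hg
  refine ⟨1, fun _ => 1, fun _ => g, fun _ i _ => 1, fun _ => hg, ?_⟩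
  funext x
  rw [Fin.sum_univ_one, one_mul]
  congr 1
  funext i cc
  show x i cc = dot (fun _ => (1 : K i)) (x i)
  rw [show cc = 0 from Subsingleton.elim cc 0]
  simp [dot]

end Gen

end LCCproof

open LCCproof in
/-- for `|K|` coprime to `|F|`, the map sending an `(F, K)`-linearly
closed clonoid to (the components of) its unary part is a lattice isomorphism onto the
direct product of the lattices of `F_{pᵢ}[K^×]`-submodules of `F_{pᵢ}^K`. -/
theorem lcc_lattice_iso_submodules
    {m s : ℕ} (K : Fin m → Type*) [∀ i, Field (K i)] [∀ i, Fintype (K i)]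
    (Fp : Fin s → Type*) [∀ i, Field (Fp i)] [∀ i, Fintype (Fp i)]
    (hcop : Nat.Coprime (∏ i, Fintype.card (K i)) (∏ i, Fintype.card (Fp i))) :
    letI pi1 : (∀ n : ℕ, Set ((∀ i, Fin n → K i) → (∀ i, Fp i))) → ∀ i : Fin s,
        Set ((∀ i, Fin 1 → K i) → Fp i) :=
      fun C i => {f | ∃ g ∈ C 1, f = fun x => g x i}
    (∀ C, IsLCC K (∀ i, Fp i) C → ∀ i, IsSubmoduleKx K (Fp i) (pi1 C i)) ∧
    (∀ C D, IsLCC K (∀ i, Fp i) C → IsLCC K (∀ i, Fp i) D →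
      (∀ i, pi1 C i = pi1 D i) → C = D) ∧
    (∀ V : ∀ i : Fin s, Set ((∀ i, Fin 1 → K i) → Fp i),
      (∀ i, IsSubmoduleKx K (Fp i) (V i)) →
      ∃ C, IsLCC K (∀ i, Fp i) C ∧ ∀ i, pi1 C i = V i) ∧
    (∀ C D, IsLCC K (∀ i, Fp i) C → IsLCC K (∀ i, Fp i) D →
      ((∀ n, C n ⊆ D n) ↔ ∀ i, pi1 C i ⊆ pi1 D i)) := by
  classical
  -- the order-isomorphism property, proved first and reused
  have hord : ∀ C D : ∀ n : ℕ, Set ((∀ i, Fin n → K i) → (∀ i, Fp i)),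
      IsLCC K (∀ i, Fp i) C → IsLCC K (∀ i, Fp i) D →
      ((∀ n, C n ⊆ D n) ↔ ∀ i : Fin s,
        {f | ∃ g ∈ C 1, f = fun x => g x i} ⊆ {f | ∃ g ∈ D 1, f = fun x => g x i}) := by
    intro C D hC hD
    constructor
    · intro h i f hf
      obtain ⟨g, hg, rfl⟩ := hf
      exact ⟨g, h 1 hg, rfl⟩
    · intro h n f hf
      refine mem_of_unary hcop hC hD ?_ hf
      intro g hg
      refine unary_mem_of_components hD g ?_
      intro i
      obtain ⟨h', hh', heq⟩ := h i ⟨g, hg, rfl⟩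
      exact ⟨h', hh', heq⟩
  refine ⟨?_, ?_, ?_, ?_⟩
  · -- unary parts are submodules
    intro C hC i
    refine ⟨?_, ?_, ?_⟩
    · obtain ⟨f0, hf0⟩ := lcc_nonempty hC 1
      exact ⟨_, f0, hf0, rfl⟩
    · intro a b f g hf hg
      obtain ⟨gf, hgf, rfl⟩ := hf
      obtain ⟨gg, hgg, rfl⟩ := hg
      refine ⟨_, hC.2.1 1 (Pi.single i a) (Pi.single i b) gf gg hgf hgg, ?_⟩
      funext x
      simp [Pi.single_eq_same]
    · intro f hf c
      obtain ⟨g, hg, rfl⟩ := hf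
      refine ⟨_, hC.2.2 1 1 g hg (fun i' => Matrix.of (fun _ _ => c i')), ?_⟩
      funext x
      dsimp only
      congr 2
      funext i' j
      rw [show j = 0 from Subsingleton.elim j 0]
      simp [Matrix.mulVec, dotProduct]
  · -- injectivity
    intro C D hC hD hpi
    funext n
    exact Set.Subset.antisymm
      (((hord C D hC hD).mpr (fun i => (hpi i).subset)) n)
      (((hord D C hD hC).mpr (fun i => (hpi i).symm.subset)) n)
  · -- surjectivity
    intro V hV
    set S : Set ((∀ i, Fin 1 → K i) → ∀ i, Fp i) := {g | ∀ i, (fun x => g x i) ∈ V i}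
      with hS
    refine ⟨Tclo S, Tclo_isLCC S, ?_⟩
    intro i
    apply Set.Subset.antisymm
    · rintro f ⟨g, hg, rfl⟩
      obtain ⟨t, c, uu, a, hu, rfl⟩ := hg
      have hterms : ∀ j : Fin t, (fun x => uu j (rowFn (a j) x) i) ∈ V i := by
        intro j
        have h1 : (fun y => uu j y i) ∈ V i := hu j i
        have h2 := (hV i).2.2 _ h1 (fun i' => a j i' 0)
        have he2 : (fun x : ∀ i', Fin 1 → K i' =>
            (fun y => uu j y i) (fun i' j' => a j i' 0 * x i' j'))
              = fun x => uu j (rowFn (a j) x) i := by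
          funext x
          dsimp only
          congr 2
          funext i' j'
          show a j i' 0 * x i' j' = dot (a j i') (x i')
          rw [show j' = 0 from Subsingleton.elim j' 0]
          simp [dot]
        rwa [he2] at h2
      have hVsum := combo_sum (hV i).1 (hV i).2.1 Finset.univ (fun j => c j i)
        (fun j => fun x => uu j (rowFn (a j) x) i) (fun j _ => hterms j)
      have he : (fun x => ∑ j, (c j i) * (uu j (rowFn (a j) x) i))
          = fun x => (∑ j, c j * uu j (rowFn (a j) x)) i := by
        funext x
        rw [Finset.sum_apply]
        rfl
      rwa [he] at hVsum
    · intro f hf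
      choose w hw using fun i' => (hV i').1
      refine ⟨fun x => Function.update (fun i' => w i' x) i (f x), S_sub_Tclo S ?_, ?_⟩
      · intro i'
        rcases eq_or_ne i' i with rfl | hne
        · have he : (fun x => Function.update (fun i'' => w i'' x) i' (f x) i') = f := by
            funext x
            exact Function.update_self i' (f x) _
          rw [he]; exact hf
        · have he : (fun x => Function.update (fun i'' => w i'' x) i (f x) i') = w i' := by
            funext x
            exact Function.update_of_ne hne (f x) _
          rw [he]; exact hw i'
      · funext x
        exact (Function.update_self i (f x) _).symm
  · -- order isomorphism
    exact hord
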